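/- Let q_k(Y) = tr(Yᵀ A_k Y) + 2 tr(B_kᵀ Y) + c_k for k in a finite index set Q, with gradients ∇q_k(Y) = 2(A_k Y + B_k). Define the Jacobian J_Q(Y) whose rows are vec(∇q_k(Y))ᵀ for k ∈ Q, and the pencil norm ρ₂ = max{‖Σ_{k∈Q} τ_k A_k‖₂ : ‖τ‖₂ = 1}. Then for any Y₁, Y₂ ∈ ℝ^{n×m}, σ_min(J_Q(Y₂)) ≥ σ_min(J_Q(Y₁)) − 2 ρ₂ ‖Y₁ − Y₂‖_F, where σ_min denotes the smallest singular value (set to 0 if |Q| > nm). -/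

import Mathlib

open Matrix Finset

/-- Frobenius norm of a real matrix. -/
noncomputable def frob {n m : ℕ} (M : Matrix (Fin n) (Fin m) ℝ) : ℝ :=
  Real.sqrt (∑ i, ∑ j, (M i j) ^ 2)

/-- Spectral (operator) norm of a square real matrix. -/
noncomputable def spec {n : ℕ} (A : Matrix (Fin n) (Fin n) ℝ) : ℝ :=
  ‖Matrix.toEuclideanCLM (𝕜 := ℝ) A‖

/-- Euclidean norm of a finitely-indexed real vector. -/
noncomputable def euc {ι : Type*} [Fintype ι] (x : ι → ℝ) : ℝ :=
  Real.sqrt (∑ i, (x i) ^ 2)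

/-- The quadratic function q(Y) = tr(Yᵀ A Y) + 2 tr(Bᵀ Y) + c. -/
noncomputable def quadF {n m : ℕ} (A : Matrix (Fin n) (Fin n) ℝ)
    (B : Matrix (Fin n) (Fin m) ℝ) (c : ℝ) (Y : Matrix (Fin n) (Fin m) ℝ) : ℝ :=
  (Yᵀ * A * Y).trace + 2 * (Bᵀ * Y).trace + c

/-- The gradient ∇q(Y) = 2(AY + B). -/
noncomputable def gradF {n m : ℕ} (A : Matrix (Fin n) (Fin n) ℝ)
    (B Y : Matrix (Fin n) (Fin m) ℝ) : Matrix (Fin n) (Fin m) ℝ :=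
  (2 : ℝ) • (A * Y + B)

/-- Frobenius distance from a point to a set of matrices. -/
noncomputable def distF {n m : ℕ} (F : Set (Matrix (Fin n) (Fin m) ℝ))
    (Z : Matrix (Fin n) (Fin m) ℝ) : ℝ :=
  sInf ((fun Y => frob (Y - Z)) '' F)

/-- Smallest singular value: σ_min(J) = inf{‖Jᵀξ‖₂ : ‖ξ‖₂ = 1}. -/
noncomputable def sigMin {ι κ : Type*} [Fintype ι] [Fintype κ] (J : Matrix ι κ ℝ) : ℝ :=
  sInf {r | ∃ ξ : ι → ℝ, euc ξ = 1 ∧ r = euc (J.transpose.mulVec ξ)}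

/-- Spectral norm of a rectangular matrix: sup{‖Jx‖₂ : ‖x‖₂ = 1}. -/
noncomputable def specR {ι κ : Type*} [Fintype ι] [Fintype κ] (J : Matrix ι κ ℝ) : ℝ :=
  sSup {r | ∃ x : κ → ℝ, euc x = 1 ∧ r = euc (J.mulVec x)}

/-- Maximum absolute row-sum norm ‖M‖₁. -/
noncomputable def rowNorm {n : ℕ} (A : Matrix (Fin n) (Fin n) ℝ) : ℝ :=
  ⨆ i, ∑ j, |A i j|

/-! ### Auxiliary lemmas -/

lemma euc_eq {ι : Type*} [Fintype ι] (x : ι → ℝ) :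
    euc x = ‖(WithLp.equiv 2 (ι → ℝ)).symm x‖ := by
  rw [EuclideanSpace.norm_eq]
  simp [euc, sq_abs]

lemma euc_nonneg {ι : Type*} [Fintype ι] (x : ι → ℝ) : 0 ≤ euc x := Real.sqrt_nonneg _

lemma euc_add_le {ι : Type*} [Fintype ι] (x y : ι → ℝ) : euc (x + y) ≤ euc x + euc y := by
  simp only [euc_eq]
  rw [show (WithLp.equiv 2 (ι → ℝ)).symm (x + y)
      = (WithLp.equiv 2 (ι → ℝ)).symm x + (WithLp.equiv 2 (ι → ℝ)).symm y from rfl]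
  exact norm_add_le _ _

lemma euc_smul {ι : Type*} [Fintype ι] (c : ℝ) (x : ι → ℝ) : euc (c • x) = |c| * euc x := by
  simp only [euc_eq]
  rw [show (WithLp.equiv 2 (ι → ℝ)).symm (c • x)
      = c • (WithLp.equiv 2 (ι → ℝ)).symm x from rfl]
  rw [norm_smul, Real.norm_eq_abs]

lemma euc_mulVec_le {n : ℕ} (A : Matrix (Fin n) (Fin n) ℝ) (v : Fin n → ℝ) :
    euc (A.mulVec v) ≤ spec A * euc v := by
  simp only [euc_eq]
  have h : (WithLp.equiv 2 (Fin n → ℝ)).symm (A.mulVec v)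
      = Matrix.toEuclideanCLM (𝕜 := ℝ) A ((WithLp.equiv 2 (Fin n → ℝ)).symm v) := by
    exact (Matrix.toEuclideanCLM_toLp (𝕜 := ℝ) A v).symm
  rw [h]
  exact (Matrix.toEuclideanCLM (𝕜 := ℝ) A).le_opNorm _

lemma frob_nonneg {n m : ℕ} (M : Matrix (Fin n) (Fin m) ℝ) : 0 ≤ frob M := Real.sqrt_nonneg _

lemma euc_sq {ι : Type*} [Fintype ι] (x : ι → ℝ) : euc x ^ 2 = ∑ i, (x i) ^ 2 :=
  Real.sq_sqrt (Finset.sum_nonneg fun _ _ => sq_nonneg _)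

lemma spec_nonneg {n : ℕ} (A : Matrix (Fin n) (Fin n) ℝ) : 0 ≤ spec A := norm_nonneg _

lemma frob_mul_le {n m : ℕ} (A : Matrix (Fin n) (Fin n) ℝ) (M : Matrix (Fin n) (Fin m) ℝ) :
    frob (A * M) ≤ spec A * frob M := by
  have h1 : ∀ (N : Matrix (Fin n) (Fin m) ℝ), frob N = Real.sqrt (∑ j, ∑ i, (N i j) ^ 2) := by
    intro N; rw [frob, Finset.sum_comm]
  rw [h1, h1]
  have key : ∑ j, ∑ i, ((A * M) i j) ^ 2 ≤ spec A ^ 2 * ∑ j, ∑ i, (M i j) ^ 2 := by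
    rw [Finset.mul_sum]
    refine Finset.sum_le_sum fun j _ => ?_
    have hc : ∀ i, (A * M) i j = A.mulVec (fun i' => M i' j) i := by
      intro i; simp [Matrix.mul_apply, Matrix.mulVec, dotProduct]
    calc ∑ i, ((A * M) i j) ^ 2 = euc (A.mulVec (fun i' => M i' j)) ^ 2 := by
          rw [euc_sq]; exact Finset.sum_congr rfl fun i _ => by rw [hc]
      _ ≤ (spec A * euc (fun i' => M i' j)) ^ 2 := by
          apply pow_le_pow_left₀ (Real.sqrt_nonneg _) (euc_mulVec_le A _)
      _ = spec A ^ 2 * ∑ i, (M i j) ^ 2 := by rw [mul_pow, euc_sq]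
  calc Real.sqrt (∑ j, ∑ i, ((A * M) i j) ^ 2)
      ≤ Real.sqrt (spec A ^ 2 * ∑ j, ∑ i, (M i j) ^ 2) := Real.sqrt_le_sqrt key
    _ = spec A * Real.sqrt (∑ j, ∑ i, (M i j) ^ 2) := by
        rw [Real.sqrt_mul (sq_nonneg _), Real.sqrt_sq (spec_nonneg A)]

lemma euc_vec_eq_frob {n m : ℕ} (M : Matrix (Fin n) (Fin m) ℝ) :
    euc (fun p : Fin n × Fin m => M p.1 p.2) = frob M := by
  simp [euc, frob, Fintype.sum_prod_type]

set_option synthInstance.maxHeartbeats 1000000 in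
lemma spec_sum_smul_le {n K : ℕ} (A : Fin K → Matrix (Fin n) (Fin n) ℝ) (τ : Fin K → ℝ) :
    spec (∑ k, τ k • A k) ≤ ∑ k, |τ k| * spec (A k) := by
  unfold spec
  rw [map_sum]
  refine (norm_sum_le _ _).trans ?_
  refine Finset.sum_le_sum fun k _ => ?_
  rw [_root_.map_smul]
  rw [norm_smul (τ k) (Matrix.toEuclideanCLM (𝕜 := ℝ) (A k)), Real.norm_eq_abs]

lemma abs_le_one_of_euc_eq_one {K : ℕ} {τ : Fin K → ℝ} (h : euc τ = 1) (k : Fin K) :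
    |τ k| ≤ 1 := by
  have hs : ∑ i, (τ i) ^ 2 = 1 := by
    have := euc_sq τ; rw [h] at this; simpa using this.symm
  have hk : (τ k) ^ 2 ≤ 1 := by
    rw [← hs]
    exact Finset.single_le_sum (fun i _ => sq_nonneg (τ i)) (Finset.mem_univ k)
  nlinarith [abs_nonneg (τ k), sq_abs (τ k)]

theorem jacobian_sigma_min_perturbation {n m K : ℕ} (hK : K ≤ n * m)
    (A : Fin K → Matrix (Fin n) (Fin n) ℝ) (hA : ∀ k, (A k).IsSymm)
    (B : Fin K → Matrix (Fin n) (Fin m) ℝ)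
    (ρ₂ : ℝ)
    (hρ₂ : ρ₂ = sSup {r | ∃ τ : Fin K → ℝ, euc τ = 1 ∧ r = spec (∑ k, τ k • A k)})
    (Y₁ Y₂ : Matrix (Fin n) (Fin m) ℝ) :
    sigMin (Matrix.of fun (k : Fin K) (p : Fin n × Fin m) =>
        (2 : ℝ) * ((A k * Y₁ + B k) p.1 p.2)) - 2 * ρ₂ * frob (Y₁ - Y₂) ≤
      sigMin (Matrix.of fun (k : Fin K) (p : Fin n × Fin m) =>
        (2 : ℝ) * ((A k * Y₂ + B k) p.1 p.2)) := by
  obtain rfl | hK0 := Nat.eq_zero_or_pos K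
  · -- K = 0 : all the sets are empty
    have h0 : ∀ ξ : Fin 0 → ℝ, euc ξ = 0 := fun ξ => by simp [euc]
    have hemptyS : ∀ (J : Matrix (Fin 0) (Fin n × Fin m) ℝ),
        {r | ∃ ξ : Fin 0 → ℝ, euc ξ = 1 ∧ r = euc (J.transpose.mulVec ξ)} = (∅ : Set ℝ) := by
      intro J
      ext r
      simp only [Set.mem_setOf_eq, Set.mem_empty_iff_false, iff_false, not_exists]
      rintro ξ ⟨h1, -⟩
      rw [h0 ξ] at h1; norm_num at h1
    have hemptyT : {r | ∃ τ : Fin 0 → ℝ, euc τ = 1 ∧ r = spec (∑ k, τ k • A k)} = (∅ : Set ℝ) := by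
      ext r
      simp only [Set.mem_setOf_eq, Set.mem_empty_iff_false, iff_false, not_exists]
      rintro τ ⟨h1, -⟩
      rw [h0 τ] at h1; norm_num at h1
    rw [hρ₂, hemptyT, Real.sSup_empty]
    rw [sigMin, sigMin, hemptyS, hemptyS, Real.sInf_empty]
    simp
  · -- K ≥ 1
    set J₁ : Matrix (Fin K) (Fin n × Fin m) ℝ := Matrix.of fun (k : Fin K) (p : Fin n × Fin m) =>
        (2 : ℝ) * ((A k * Y₁ + B k) p.1 p.2) with hJ₁
    set J₂ : Matrix (Fin K) (Fin n × Fin m) ℝ := Matrix.of fun (k : Fin K) (p : Fin n × Fin m) =>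
        (2 : ℝ) * ((A k * Y₂ + B k) p.1 p.2) with hJ₂
    set S₁ := {r | ∃ ξ : Fin K → ℝ, euc ξ = 1 ∧ r = euc (J₁.transpose.mulVec ξ)} with hS₁
    set S₂ := {r | ∃ ξ : Fin K → ℝ, euc ξ = 1 ∧ r = euc (J₂.transpose.mulVec ξ)} with hS₂
    -- a unit vector
    set z : Fin K := ⟨0, hK0⟩ with hz
    have hξ₀ : euc ((Pi.single z 1 : Fin K → ℝ)) = 1 := by
      have : ∀ i, ((Pi.single z 1 : Fin K → ℝ) i) ^ 2 = if i = z then 1 else 0 := by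
        intro i; by_cases h : i = z <;> simp [h, Pi.single_apply]
      rw [euc]
      rw [Finset.sum_congr rfl fun i _ => this i]
      simp
    have hS₂ne : S₂.Nonempty := ⟨euc (J₂.transpose.mulVec ((Pi.single z 1 : Fin K → ℝ))), (Pi.single z 1 : Fin K → ℝ), hξ₀, rfl⟩
    have hbdd : BddBelow S₁ := by
      refine ⟨0, ?_⟩
      rintro r ⟨ξ, -, rfl⟩
      exact euc_nonneg _
    -- bounded above for the ρ₂ set
    have hbddT : BddAbove {r | ∃ τ : Fin K → ℝ, euc τ = 1 ∧ r = spec (∑ k, τ k • A k)} := by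
      refine ⟨∑ k, spec (A k), ?_⟩
      rintro r ⟨τ, hτ, rfl⟩
      refine (spec_sum_smul_le A τ).trans (Finset.sum_le_sum fun k _ => ?_)
      exact mul_le_of_le_one_left (spec_nonneg _) (abs_le_one_of_euc_eq_one hτ k)
    have hρ₂le : ∀ τ : Fin K → ℝ, euc τ = 1 → spec (∑ k, τ k • A k) ≤ ρ₂ := by
      intro τ hτ
      rw [hρ₂]
      exact le_csSup hbddT ⟨τ, hτ, rfl⟩
    -- key perturbation bound
    have hkey : ∀ ξ : Fin K → ℝ, euc ξ = 1 →
        euc (J₁.transpose.mulVec ξ) ≤ euc (J₂.transpose.mulVec ξ) + 2 * ρ₂ * frob (Y₁ - Y₂) := by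
      intro ξ hξ
      have hdec : J₁.transpose.mulVec ξ = J₂.transpose.mulVec ξ +
          (2 : ℝ) • (fun p : Fin n × Fin m => ((∑ k, ξ k • A k) * (Y₁ - Y₂)) p.1 p.2) := by
        funext p
        have hM : ((∑ k, ξ k • A k) * (Y₁ - Y₂)) p.1 p.2
            = ∑ k, ξ k * ((A k * Y₁) p.1 p.2 - (A k * Y₂) p.1 p.2) := by
          have h1 : (∑ k, ξ k • A k) * (Y₁ - Y₂) = ∑ k, ξ k • (A k * Y₁ - A k * Y₂) := by
            rw [Matrix.sum_mul]
            exact Finset.sum_congr rfl fun k _ => by rw [Matrix.smul_mul, Matrix.mul_sub]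
          rw [h1]
          simp [Matrix.sum_apply, Matrix.sub_apply]
        simp only [Pi.add_apply, Pi.smul_apply, smul_eq_mul, hM, Matrix.mulVec, dotProduct,
          Matrix.transpose_apply, hJ₁, hJ₂, Matrix.of_apply, Finset.mul_sum,
          ← Finset.sum_add_distrib]
        refine Finset.sum_congr rfl fun k _ => ?_
        simp only [Matrix.add_apply]
        ring
      calc euc (J₁.transpose.mulVec ξ)
          ≤ euc (J₂.transpose.mulVec ξ) +
            euc ((2 : ℝ) • (fun p : Fin n × Fin m => ((∑ k, ξ k • A k) * (Y₁ - Y₂)) p.1 p.2)) := by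
            rw [hdec]; exact euc_add_le _ _
        _ ≤ euc (J₂.transpose.mulVec ξ) + 2 * ρ₂ * frob (Y₁ - Y₂) := by
            gcongr euc (J₂.transpose.mulVec ξ) + ?_
            rw [euc_smul, euc_vec_eq_frob]
            have h2 : |(2:ℝ)| = 2 := by norm_num
            rw [h2, mul_assoc]
            refine mul_le_mul_of_nonneg_left ?_ (by norm_num)
            calc frob ((∑ k, ξ k • A k) * (Y₁ - Y₂))
                ≤ spec (∑ k, ξ k • A k) * frob (Y₁ - Y₂) := frob_mul_le _ _
              _ ≤ ρ₂ * frob (Y₁ - Y₂) :=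
                  mul_le_mul_of_nonneg_right (hρ₂le ξ hξ) (frob_nonneg _)
    -- conclude
    show sInf S₁ - 2 * ρ₂ * frob (Y₁ - Y₂) ≤ sInf S₂
    refine le_csInf hS₂ne ?_
    rintro r ⟨ξ, hξ, rfl⟩
    rw [sub_le_iff_le_add]
    calc sInf S₁ ≤ euc (J₁.transpose.mulVec ξ) := csInf_le hbdd ⟨ξ, hξ, rfl⟩
      _ ≤ euc (J₂.transpose.mulVec ξ) + 2 * ρ₂ * frob (Y₁ - Y₂) := hkey ξ hξ
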